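/- Suppose |G(t,x)| ≤ M and |R(t,x,ε)| ≤ M for all (t,x,ε), and that G is Lipschitz with respect to x with constant L, uniformly in t. Let ε ∈ [−1,1], z ∈ ℝⁿ, and let x : [0,T] → ℝⁿ be a differentiable function with x(0) = z satisfying x'(t) = ε·G(t, x(t)) + ε²·R(t, x(t), ε) for all t ∈ [0,T]. Then the time-T map admits the first-order expansion |x(T) − z − ε·g(z)| ≤ ε²·M·T·(L·T + 1). -/

import Mathlib

open Set

/-- First-order expansion of the time-`T` map: if `x' = ε G(t,x) + ε² R(t,x,ε)` on `[0,T]`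
with `x(0) = z`, `‖G‖ ≤ M`, `‖R‖ ≤ M`, `G` Lipschitz in `x` with constant `L`, and
`g(z) = ∫₀ᵀ G(t,z) dt`, then `‖x(T) − z − ε g(z)‖ ≤ ε² M T (L T + 1)`. -/
theorem time_T_map_expansion {n : ℕ} (T : ℝ) (hT : 0 < T)
    (G : ℝ → EuclideanSpace ℝ (Fin n) → EuclideanSpace ℝ (Fin n))
    (R : ℝ → EuclideanSpace ℝ (Fin n) → ℝ → EuclideanSpace ℝ (Fin n))
    (hGc : Continuous (fun p : ℝ × EuclideanSpace ℝ (Fin n) => G p.1 p.2))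
    (hGper : ∀ t x, G (t + T) x = G t x)
    (hRc : ContinuousOn (fun p : ℝ × EuclideanSpace ℝ (Fin n) × ℝ => R p.1 p.2.1 p.2.2)
      (univ ×ˢ univ ×ˢ Icc (-1 : ℝ) 1))
    (M L : ℝ) (hL : 0 ≤ L)
    (hGM : ∀ t x, ‖G t x‖ ≤ M)
    (hRM : ∀ t x, ∀ ε ∈ Icc (-1 : ℝ) 1, ‖R t x ε‖ ≤ M)
    (hGlip : ∀ (t : ℝ) (x₁ x₂ : EuclideanSpace ℝ (Fin n)), ‖G t x₁ - G t x₂‖ ≤ L * ‖x₁ - x₂‖)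
    (ε : ℝ) (hε : ε ∈ Icc (-1 : ℝ) 1)
    (z : EuclideanSpace ℝ (Fin n)) (x : ℝ → EuclideanSpace ℝ (Fin n)) (hx0 : x 0 = z)
    (hode : ∀ t ∈ Icc (0 : ℝ) T,
      HasDerivWithinAt x (ε • G t (x t) + ε ^ 2 • R t (x t) ε) (Icc (0 : ℝ) T) t) :
    ‖x T - z - ε • ∫ t in (0 : ℝ)..T, G t z‖ ≤ ε ^ 2 * M * T * (L * T + 1) := by
  have hM0 : (0:ℝ) ≤ M := le_trans (norm_nonneg _) (hGM 0 z)
  have hεabs : |ε| ≤ 1 := abs_le.2 ⟨hε.1, hε.2⟩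
  have habs : (0:ℝ) ≤ |ε| := abs_nonneg ε
  have hsq : |ε| * |ε| = ε ^ 2 := by rw [← abs_mul, ← sq, abs_of_nonneg (sq_nonneg ε)]
  set f : ℝ → EuclideanSpace ℝ (Fin n) :=
    fun t => ε • G t (x t) + ε ^ 2 • R t (x t) ε with hf
  -- continuity facts
  have hxc : ContinuousOn x (Icc 0 T) := fun t ht => (hode t ht).continuousWithinAt
  have hGxc : ContinuousOn (fun t => G t (x t)) (Icc 0 T) :=
    hGc.comp_continuousOn (continuousOn_id.prodMk hxc)
  have hRxc : ContinuousOn (fun t => R t (x t) ε) (Icc 0 T) := by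
    have hm : ContinuousOn (fun t => (t, x t, ε)) (Icc 0 T) :=
      continuousOn_id.prodMk (hxc.prodMk continuousOn_const)
    exact hRc.comp hm (fun t ht => ⟨mem_univ _, mem_univ _, hε⟩)
  have hfc : ContinuousOn f (Icc 0 T) := (hGxc.const_smul ε).add (hRxc.const_smul (ε^2))
  have hfint : IntervalIntegrable f MeasureTheory.volume 0 T :=
    (hfc.mono (by rw [uIcc_of_le hT.le])).intervalIntegrable
  -- pointwise bound on ‖f t‖
  have hfbound : ∀ t ∈ Icc (0:ℝ) T, ‖f t‖ ≤ (|ε| + ε^2) * M := by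
    intro t ht
    calc ‖f t‖ ≤ ‖ε • G t (x t)‖ + ‖ε ^ 2 • R t (x t) ε‖ := norm_add_le _ _
    _ = |ε| * ‖G t (x t)‖ + ε^2 * ‖R t (x t) ε‖ := by
        rw [norm_smul, norm_smul, Real.norm_eq_abs, Real.norm_eq_abs, abs_of_nonneg (sq_nonneg ε)]
    _ ≤ |ε| * M + ε^2 * M :=
        add_le_add (mul_le_mul_of_nonneg_left (hGM _ _) habs)
          (mul_le_mul_of_nonneg_left (hRM _ _ _ hε) (sq_nonneg ε))
    _ = (|ε| + ε^2) * M := by ring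
  -- bound on ‖x t - z‖
  have hxz : ∀ t ∈ Icc (0:ℝ) T, ‖x t - z‖ ≤ (|ε| + ε^2) * M * t := by
    intro t ht
    have h := (convex_Icc (0:ℝ) T).norm_image_sub_le_of_norm_hasDerivWithin_le
      hode hfbound (left_mem_Icc.2 hT.le) ht
    rw [hx0] at h
    simpa [abs_of_nonneg ht.1] using h
  -- FTC
  have hftc : ∫ t in (0:ℝ)..T, f t = x T - x 0 := by
    apply intervalIntegral.integral_eq_sub_of_hasDeriv_right_of_le hT.le hxc _ hfint
    intro t ht
    exact ((hode t (Ioo_subset_Icc_self ht)).hasDerivAt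
      (Icc_mem_nhds ht.1 ht.2)).hasDerivWithinAt
  have hGzint : IntervalIntegrable (fun t => G t z) MeasureTheory.volume 0 T :=
    (hGc.comp (continuous_id.prodMk continuous_const)).intervalIntegrable 0 T
  -- rewrite the LHS as a single integral
  have key : (∫ t in (0:ℝ)..T, (ε • (G t (x t) - G t z) + ε ^ 2 • R t (x t) ε))
      = x T - z - ε • ∫ t in (0:ℝ)..T, G t z := by
    have heq : ∀ t : ℝ, ε • (G t (x t) - G t z) + ε ^ 2 • R t (x t) ε = f t - ε • G t z := by
      intro t; simp only [f]; module
    simp_rw [heq]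
    have hεG : IntervalIntegrable (fun t => ε • G t z) MeasureTheory.volume 0 T := by
      have := hGzint.smul ε; exact this
    rw [intervalIntegral.integral_sub hfint hεG,
      intervalIntegral.integral_smul, hftc, hx0]
  rw [← key]
  -- pointwise bound for the integrand
  have hpt : ∀ t ∈ Icc (0:ℝ) T,
      ‖ε • (G t (x t) - G t z) + ε ^ 2 • R t (x t) ε‖ ≤ 2 * ε^2 * L * M * t + ε^2 * M := by
    intro t ht
    have hLMt : (0:ℝ) ≤ L * M * t := mul_nonneg (mul_nonneg hL hM0) ht.1
    have hcoef : |ε| * (|ε| + ε^2) ≤ 2 * ε^2 := by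
      have : |ε| * ε^2 ≤ ε^2 := mul_le_of_le_one_left (sq_nonneg ε) hεabs
      nlinarith
    calc ‖ε • (G t (x t) - G t z) + ε ^ 2 • R t (x t) ε‖
        ≤ ‖ε • (G t (x t) - G t z)‖ + ‖ε ^ 2 • R t (x t) ε‖ := norm_add_le _ _
    _ = |ε| * ‖G t (x t) - G t z‖ + ε^2 * ‖R t (x t) ε‖ := by
        rw [norm_smul, norm_smul, Real.norm_eq_abs, Real.norm_eq_abs, abs_of_nonneg (sq_nonneg ε)]
    _ ≤ |ε| * (L * ((|ε| + ε^2) * M * t)) + ε^2 * M := by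
        refine add_le_add (mul_le_mul_of_nonneg_left ?_ habs)
          (mul_le_mul_of_nonneg_left (hRM _ _ _ hε) (sq_nonneg ε))
        exact le_trans (hGlip _ _ _) (mul_le_mul_of_nonneg_left (hxz t ht) hL)
    _ = (|ε| * (|ε| + ε^2)) * (L * M * t) + ε^2 * M := by ring
    _ ≤ (2 * ε^2) * (L * M * t) + ε^2 * M :=
        add_le_add_left (mul_le_mul_of_nonneg_right hcoef hLMt) _
    _ = 2 * ε^2 * L * M * t + ε^2 * M := by ring
  -- integrate the bound
  have hbc : Continuous (fun t : ℝ => 2 * ε^2 * L * M * t + ε^2 * M) := by fun_prop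
  have hnorm : ‖∫ t in (0:ℝ)..T, (ε • (G t (x t) - G t z) + ε ^ 2 • R t (x t) ε)‖
      ≤ |∫ t in (0:ℝ)..T, (2 * ε^2 * L * M * t + ε^2 * M)| := by
    apply intervalIntegral.norm_integral_le_abs_of_norm_le _ (hbc.intervalIntegrable 0 T)
    filter_upwards [MeasureTheory.ae_restrict_mem measurableSet_uIoc] with t ht
    refine hpt t (Ioc_subset_Icc_self ?_)
    rwa [uIoc_of_le hT.le] at ht
  have hval : ∫ t in (0:ℝ)..T, (2 * ε^2 * L * M * t + ε^2 * M)
      = ε^2 * L * M * T^2 + ε^2 * M * T := by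
    have h1 : IntervalIntegrable (fun t : ℝ => 2 * ε^2 * L * M * t) MeasureTheory.volume 0 T :=
      Continuous.intervalIntegrable (by fun_prop) 0 T
    rw [intervalIntegral.integral_add h1 intervalIntegrable_const, intervalIntegral.integral_const_mul, integral_id,
      intervalIntegral.integral_const]
    simp
    ring
  calc ‖∫ t in (0:ℝ)..T, (ε • (G t (x t) - G t z) + ε ^ 2 • R t (x t) ε)‖
      ≤ |∫ t in (0:ℝ)..T, (2 * ε^2 * L * M * t + ε^2 * M)| := hnorm
  _ = ε^2 * L * M * T^2 + ε^2 * M * T := by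
      rw [hval, abs_of_nonneg (by positivity)]
  _ = ε ^ 2 * M * T * (L * T + 1) := by ring
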